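/- Let t ≥ 3 be an odd integer and let d be a rational with d > t − 1. Then there exist positive integers a, b with a even and b ≥ 2a + 2 such that (3t−9)/4 + (t−3)/(2a) + b/a = d. -/
import Mathlib


set_option maxHeartbeats 1000000 in
/-- For odd `t ≥ 3`, every rational `d > t - 1` is realized by the Type 2 density
formula `d_t^2(a,b) = (3t-9)/4 + (t-3)/(2a) + b/a` for some positive integers `a, b`
with `a` even and `b ≥ 2a + 2`. -/
theorem type2_density_range (t : ℕ) (ht : 3 ≤ t) (hodd : Odd t)
    (d : ℚ) (hd : (t : ℚ) - 1 < d) :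
    ∃ a b : ℕ, 0 < a ∧ Even a ∧ 2 * a + 2 ≤ b ∧
      (3 * (t : ℚ) - 9) / 4 + ((t : ℚ) - 3) / (2 * (a : ℚ)) + (b : ℚ) / (a : ℚ) = d := by
  obtain ⟨j, hj⟩ := hodd
  have hj1 : 1 ≤ j := by omega
  have htq : (t : ℚ) = 2 * (j : ℚ) + 1 := by
    rw [hj]; push_cast; ring
  set q : ℕ := d.den with hq
  have hq0 : 0 < (q : ℚ) := by exact_mod_cast d.pos
  have hpq : (d.num : ℚ) = d * q := by
    rw [hq]
    exact_mod_cast (Rat.mul_den_eq_num d).symm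
  set p : ℤ := d.num with hp
  set s : ℕ := j - 1 with hs
  have hsq : (s : ℚ) = (j : ℚ) - 1 := by
    rw [hs]; push_cast [hj1]; ring
  set m : ℕ := 3 * (j - 1) with hmdef
  have hmq : (m : ℚ) = 3 * (j : ℚ) - 3 := by
    rw [hmdef]; push_cast [hj1]; ring
  set c : ℤ := 2 * p - (q : ℤ) * m - 4 * q with hc
  have hcq : (c : ℚ) = 2 * d * q - (q : ℚ) * m - 4 * q := by
    rw [hc]; push_cast [hpq]; ring
  have hc1 : (1 : ℤ) ≤ c := by
    have hcpos : (0 : ℚ) < (c : ℚ) := by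
      rw [hcq, hmq]
      have hjq : (1 : ℚ) ≤ (j : ℚ) := by exact_mod_cast hj1
      nlinarith [hd, htq, hq0]
    exact_mod_cast hcpos
  set k : ℕ := s + 2 with hk
  set a : ℕ := 2 * q * k with ha
  set B : ℤ := 2 * (k : ℤ) * p - (q : ℤ) * k * m - s with hB
  have hkz : (k : ℤ) = (s : ℤ) + 2 := by rw [hk]; push_cast; ring
  have hBge : 4 * (q : ℤ) * k + 2 ≤ B := by
    have : B - (4 * (q : ℤ) * k + 2) = (k : ℤ) * c - ((s : ℤ) + 2) := by
      rw [hB, hc]; ring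
    nlinarith [hc1, hkz]
  have hq0' : 0 < q := d.pos
  have hqk : (0:ℤ) ≤ 4 * (q:ℤ) * k := by positivity
  have hBpos : 0 ≤ B := by linarith
  refine ⟨a, B.toNat, ?_, ?_, ?_, ?_⟩
  · exact Nat.mul_pos (Nat.mul_pos two_pos d.pos) (by omega)
  · exact ⟨q * k, by rw [ha]; ring⟩
  · zify
    rw [Int.toNat_of_nonneg (by nlinarith [hBge] : (0:ℤ) ≤ B)]
    push_cast [ha]
    nlinarith [hBge]
  · have hbq : ((B.toNat : ℕ) : ℚ) = 2 * (k : ℚ) * (d * q) - (q : ℚ) * k * m - s := by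
      have h1 : ((B.toNat : ℕ) : ℤ) = B := Int.toNat_of_nonneg (by nlinarith [hBge])
      have h2 : ((B.toNat : ℕ) : ℚ) = ((B : ℤ) : ℚ) := by exact_mod_cast congrArg (Int.cast : ℤ → ℚ) h1
      rw [h2, hB]; push_cast [hpq]; ring
    have haq : ((a : ℕ) : ℚ) = 2 * (q : ℚ) * k := by rw [ha]; push_cast; ring
    have hkq : (k : ℚ) = (s : ℚ) + 2 := by rw [hk]; push_cast; ring
    have ha0 : (0 : ℚ) < ((a : ℕ) : ℚ) := by
      rw [haq, hkq, hsq]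
      have hjq : (1 : ℚ) ≤ (j : ℚ) := by exact_mod_cast hj1
      nlinarith [hq0]
    rw [hbq, haq, htq, hkq, hsq, hmq]
    have hjq : (1 : ℚ) ≤ (j : ℚ) := by exact_mod_cast hj1
    have hne : (j : ℚ) - 1 + 2 ≠ 0 := by
      intro h
      have h0 : (0:ℚ) ≤ (j:ℚ) := Nat.cast_nonneg j
      linarith
    have hq0' : (q : ℚ) ≠ 0 := ne_of_gt hq0
    clear hbq haq htq hkq hsq hmq hcq hc1 hBge hBpos hqk hd hkz hpq ha0
    field_simp
    ring
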